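/- (Lemma 5.5) Let f : ℝ^n → ℝ be differentiable and coordinate-wise smooth with parameters (L_1,…,L_n), each L_i > 0. Fix β ∈ [0,1], set α := (1−β)/2, S_α := Σ_{i=1}^n L_i^α, and p_i := L_i^α/S_α. Fix σ_β ≥ 0, η > 0, and vectors z_k, x_{k+1} ∈ ℝ^n. For each i define y^{(i)} := x_{k+1} − (1/L_i)·∇_i f(x_{k+1})·e_i and z^{(i)} := (1/(1+ησ_β))·(z_k + ησ_β·x_{k+1} − (η/(p_i·L_i^β))·∇_i f(x_{k+1})·e_i). Then for every u ∈ ℝ^n: η·⟨∇f(x_{k+1}), z_k − u⟩ − (ησ_β/2)‖u − x_{k+1}‖²_{L_β} ≤ η²·S_α²·( f(x_{k+1}) − Σ_{i=1}^n p_i·f(y^{(i)}) ) + (1/2)‖z_k − u‖²_{L_β} − ((1+ησ_β)/2)·Σ_{i=1}^n p_i·‖z^{(i)} − u‖²_{L_β}. -/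

import Mathlib

/-- The i-th standard basis vector of ℝ^n. -/
def basisVec {n : ℕ} (i : Fin n) : Fin n → ℝ := Pi.single i 1

/-- The i-th partial derivative ∇_i f(x). -/
noncomputable def coordGrad {n : ℕ} (f : (Fin n → ℝ) → ℝ) (x : Fin n → ℝ) (i : Fin n) : ℝ :=
  fderiv ℝ f x (basisVec i)

/-- f is coordinate-wise smooth with parameters (L_1, …, L_n):
`|∇_i f(x + δ e_i) − ∇_i f(x)| ≤ L_i |δ|` for all x, δ, i. -/
def CoordSmooth {n : ℕ} (f : (Fin n → ℝ) → ℝ) (L : Fin n → ℝ) : Prop :=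
  ∀ (x : Fin n → ℝ) (δ : ℝ) (i : Fin n),
    |coordGrad f (x + δ • basisVec i) i - coordGrad f x i| ≤ L i * |δ|

/-- Weighted squared norm ‖v‖²_{L_β} := Σ_i L_i^β · v_i². -/
noncomputable def wnormSq {n : ℕ} (L : Fin n → ℝ) (β : ℝ) (v : Fin n → ℝ) : ℝ :=
  ∑ i, L i ^ β * v i ^ 2

lemma key_ineq (q l τ c a b F : ℝ) (hl : 0 ≤ l) (hq0 : 0 ≤ q) (hq1 : q ≤ 1) (hτ : 0 ≤ τ)
    (hF : q*l*c^2/2 ≤ F) :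
    q*l*c*a - τ/2*(l*b^2) ≤ F + 1/2*(l*a^2)
      - (1+τ)/2 * (l * ((1-q)*((a + τ*b)/(1+τ))^2 + q*((a + τ*b)/(1+τ) - c/(1+τ))^2)) := by
  have hT : 0 < 1+τ := by linarith
  have expand : F + 1/2*(l*a^2)
      - (1+τ)/2 * (l * ((1-q)*((a + τ*b)/(1+τ))^2 + q*((a + τ*b)/(1+τ) - c/(1+τ))^2))
      - (q*l*c*a - τ/2*(l*b^2))
      = (F - q*l*c^2/2) + τ*l/(2*(1+τ)) * (((a-b) - q*c)^2 + q*(1-q)*c^2) := by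
    field_simp
    ring
  have h2 : 0 ≤ τ*l/(2*(1+τ)) * (((a-b) - q*c)^2 + q*(1-q)*c^2) :=
    mul_nonneg (div_nonneg (mul_nonneg hτ hl) (by linarith))
      (add_nonneg (sq_nonneg _) (mul_nonneg (mul_nonneg hq0 (by linarith)) (sq_nonneg c)))
  linarith [expand]

lemma taylor_bound {n : ℕ} (f : (Fin n → ℝ) → ℝ) (L : Fin n → ℝ)
    (hf : Differentiable ℝ f) (hL : ∀ i, 0 < L i) (hsmooth : CoordSmooth f L)
    (x : Fin n → ℝ) (i : Fin n) (δ : ℝ) :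
    f (x + δ • basisVec i) ≤ f x + δ * coordGrad f x i + L i * δ^2 / 2 := by
  set v : Fin n → ℝ := basisVec i with hv
  set G : ℝ → ℝ := fun s => coordGrad f (x + s • v) i with hG
  have hGlip : ∀ s t : ℝ, |G s - G t| ≤ L i * |s - t| := by
    intro s t
    have h := hsmooth (x + t • v) (s - t) i
    have e : x + t • v + (s - t) • v = x + s • v := by
      rw [add_assoc, ← add_smul]; ring_nf
    rw [e] at h
    exact h
  have hGcont : Continuous G := by
    apply LipschitzWith.continuous (K := Real.toNNReal (L i))
    apply LipschitzWith.of_dist_le_mul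
    intro s t
    rw [Real.dist_eq, Real.dist_eq, Real.coe_toNNReal _ (le_of_lt (hL i))]
    exact hGlip s t
  have hψ : ∀ t : ℝ, HasDerivAt (fun t => f (x + (t*δ) • v)) (δ * G (t*δ)) t := by
    intro t
    have hc : HasDerivAt (fun t : ℝ => x + (t*δ) • v) (δ • v) t := by
      have h1 : HasDerivAt (fun t : ℝ => t*δ) δ t := by
        simpa using (hasDerivAt_id t).mul_const δ
      exact (h1.smul_const v).const_add x
    have := ((hf (x + (t*δ) • v)).hasFDerivAt).comp_hasDerivAt t hc
    have e : (fderiv ℝ f (x + (t*δ) • v)) (δ • v) = δ * G (t*δ) := by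
      rw [map_smul, smul_eq_mul]
      rfl
    rw [← e]
    exact this
  have hcont : Continuous (fun t : ℝ => δ * G (t*δ)) :=
    continuous_const.mul (hGcont.comp (continuous_id.mul continuous_const))
  have hFTC : (fun t => f (x + (t*δ) • v)) 1 - (fun t => f (x + (t*δ) • v)) 0
      = ∫ t in (0:ℝ)..1, δ * G (t*δ) := by
    rw [intervalIntegral.integral_eq_sub_of_hasDerivAt (fun t _ => hψ t)
      (hcont.intervalIntegrable 0 1)]
  simp only [one_mul, zero_mul, zero_smul, add_zero] at hFTC
  have hbound : |∫ t in (0:ℝ)..1, (δ * G (t*δ) - δ * G 0)| ≤ L i * δ^2 / 2 := by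
    have hInt : IntervalIntegrable (fun t : ℝ => L i * δ^2 * t) MeasureTheory.volume 0 1 :=
      (by continuity : Continuous fun t : ℝ => L i * δ^2 * t).intervalIntegrable 0 1
    have h1 : ‖∫ t in (0:ℝ)..1, (δ * G (t*δ) - δ * G 0)‖ ≤ |∫ t in (0:ℝ)..1, L i * δ^2 * t| := by
      apply intervalIntegral.norm_integral_le_abs_of_norm_le _ hInt
      apply MeasureTheory.ae_restrict_of_forall_mem measurableSet_uIoc
      intro t ht
      rw [Set.uIoc_of_le (by norm_num : (0:ℝ) ≤ 1)] at ht
      have ht0 : 0 < t := ht.1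
      have ht1 : t ≤ 1 := ht.2
      have habsmul : |δ * G (t*δ) - δ * G 0| = |δ| * |G (t*δ) - G 0| := by
        rw [← abs_mul]; ring_nf
      rw [Real.norm_eq_abs, habsmul]
      have hlip := hGlip (t*δ) 0
      simp only [sub_zero] at hlip
      have h2 : |δ| * |G (t*δ) - G 0| ≤ |δ| * (L i * |t*δ|) :=
        mul_le_mul_of_nonneg_left hlip (abs_nonneg δ)
      have habs : |δ| * |δ| = δ^2 := by rw [abs_mul_abs_self]; ring
      have h3 : |δ| * (L i * |t*δ|) = L i * δ^2 * t := by
        rw [abs_mul, abs_of_pos ht0]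
        calc |δ| * (L i * (t * |δ|)) = L i * (|δ| * |δ|) * t := by ring
        _ = L i * δ^2 * t := by rw [habs]
      linarith
    have h2 : ∫ t in (0:ℝ)..1, L i * δ^2 * t = L i * δ^2 / 2 := by
      rw [intervalIntegral.integral_const_mul, integral_id]
      ring
    have hnn : (0:ℝ) ≤ L i * δ^2 / 2 := by
      have := (hL i).le; positivity
    rw [Real.norm_eq_abs] at h1
    rw [h2, abs_of_nonneg hnn] at h1
    exact h1
  have hsub : ∫ t in (0:ℝ)..1, (δ * G (t*δ) - δ * G 0)
      = (∫ t in (0:ℝ)..1, δ * G (t*δ)) - δ * G 0 := by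
    rw [intervalIntegral.integral_sub (hcont.intervalIntegrable 0 1)
      (intervalIntegrable_const), intervalIntegral.integral_const]
    norm_num
  have hG0 : G 0 = coordGrad f x i := by
    simp [hG]
  rw [hsub, ← hFTC, hG0] at hbound
  have := abs_le.mp hbound
  linarith [this.2]

lemma descent_step {n : ℕ} (f : (Fin n → ℝ) → ℝ) (L : Fin n → ℝ)
    (hf : Differentiable ℝ f) (hL : ∀ i, 0 < L i) (hsmooth : CoordSmooth f L)
    (x : Fin n → ℝ) (i : Fin n) :
    f (x - (1 / L i * coordGrad f x i) • basisVec i)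
      ≤ f x - (coordGrad f x i)^2 / (2 * L i) := by
  have h := taylor_bound f L hf hL hsmooth x i (-(1 / L i * coordGrad f x i))
  rw [neg_smul, ← sub_eq_add_neg] at h
  have hLi := hL i
  refine h.trans (le_of_eq ?_)
  field_simp
  ring

theorem stmt_4 (n : ℕ) (f : (Fin n → ℝ) → ℝ) (L : Fin n → ℝ)
    (hf : Differentiable ℝ f) (hL : ∀ i, 0 < L i)
    (hsmooth : CoordSmooth f L)
    (β : ℝ) (hβ : β ∈ Set.Icc (0 : ℝ) 1)
    (α Sα : ℝ) (hα : α = (1 - β) / 2) (hS : Sα = ∑ i, L i ^ α)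
    (p : Fin n → ℝ) (hp : ∀ i, p i = L i ^ α / Sα)
    (σβ η : ℝ) (hσ : 0 ≤ σβ) (hη : 0 < η)
    (zk xk1 : Fin n → ℝ)
    (Y Z : Fin n → Fin n → ℝ)
    (hY : ∀ i, Y i = xk1 - (1 / L i * coordGrad f xk1 i) • basisVec i)
    (hZ : ∀ i, Z i = (1 / (1 + η * σβ)) •
      (zk + (η * σβ) • xk1 - (η / (p i * L i ^ β) * coordGrad f xk1 i) • basisVec i))
    (u : Fin n → ℝ) :
    η * (∑ i, coordGrad f xk1 i * (zk i - u i)) - η * σβ / 2 * wnormSq L β (u - xk1)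
      ≤ η ^ 2 * Sα ^ 2 * (f xk1 - ∑ i, p i * f (Y i))
        + (1 / 2) * wnormSq L β (zk - u)
        - (1 + η * σβ) / 2 * ∑ i, p i * wnormSq L β (Z i - u) := by
  rcases Nat.eq_zero_or_pos n with hn | hn
  · subst hn
    simp [wnormSq, hS]
  have hne : Nonempty (Fin n) := Fin.pos_iff_nonempty.mp hn
  set τ := η * σβ with hτdef
  have hτ0 : 0 ≤ τ := mul_nonneg hη.le hσ
  have hT : 0 < 1 + τ := by linarith
  have hSpos : 0 < Sα := by
    rw [hS]
    exact Finset.sum_pos (fun i _ => Real.rpow_pos_of_pos (hL i) α) Finset.univ_nonempty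
  have hppos : ∀ i, 0 < p i := fun i => by
    rw [hp]; exact div_pos (Real.rpow_pos_of_pos (hL i) α) hSpos
  have hpsum : ∑ i, p i = 1 := by
    simp only [hp]
    rw [← Finset.sum_div, ← hS, div_self (ne_of_gt hSpos)]
  have hple : ∀ i, p i ≤ 1 := by
    intro i
    rw [← hpsum]
    exact Finset.single_le_sum (fun j _ => (hppos j).le) (Finset.mem_univ i)
  have hℓpos : ∀ i, 0 < L i ^ β := fun i => Real.rpow_pos_of_pos (hL i) β
  set c : Fin n → ℝ := fun i => η / (p i * L i ^ β) * coordGrad f xk1 i with hcdef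
  set M : Fin n → ℝ := fun j => (zk j + τ * xk1 j) / (1 + τ) - u j with hMdef
  -- descent bound
  have hdesc : ∀ i, f (Y i) ≤ f xk1 - coordGrad f xk1 i ^ 2 / (2 * L i) := by
    intro i
    rw [hY]
    exact descent_step f L hf hL hsmooth xk1 i
  -- relation p i * L i ^ β in terms of rpow
  have hpow : ∀ i, L i ^ α * L i ^ α * L i ^ β = L i := by
    intro i
    rw [← Real.rpow_add (hL i), ← Real.rpow_add (hL i),
      show α + α + β = 1 by rw [hα]; ring, Real.rpow_one]
  have hpl : ∀ i, p i * L i ^ β = L i / (L i ^ α * Sα) := by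
    intro i
    have hA := Real.rpow_pos_of_pos (hL i) α
    have hB := hℓpos i
    rw [hp]
    field_simp
    linear_combination hpow i
  have hF : ∀ i, p i * L i ^ β * c i ^ 2 / 2 ≤ η^2 * Sα^2 * (p i * (f xk1 - f (Y i))) := by
    intro i
    have hLi := hL i
    have hA := Real.rpow_pos_of_pos (hL i) α
    have h1 : coordGrad f xk1 i ^ 2 / (2 * L i) ≤ f xk1 - f (Y i) := by linarith [hdesc i]
    have heq : p i * L i ^ β * c i ^ 2 / 2 = η^2 * Sα^2 * (p i * (coordGrad f xk1 i ^ 2 / (2 * L i))) := by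
      simp only [hcdef]
      rw [hpl i, hp i]
      field_simp
    rw [heq]
    have h2 : p i * (coordGrad f xk1 i ^ 2 / (2 * L i)) ≤ p i * (f xk1 - f (Y i)) :=
      mul_le_mul_of_nonneg_left h1 (hppos i).le
    exact mul_le_mul_of_nonneg_left h2 (by positivity)
  have hgc : ∀ i, η * coordGrad f xk1 i = p i * L i ^ β * c i := by
    intro i
    simp only [hcdef]
    have h1 : p i * L i ^ β ≠ 0 := ne_of_gt (mul_pos (hppos i) (hℓpos i))
    field_simp
    rw [mul_assoc, mul_div_cancel_right₀ _ h1]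
  -- coordinates of Z i - u
  have hZu : ∀ i j, (Z i - u) j = if j = i then M j - c i / (1 + τ) else M j := by
    intro i j
    have hp0 : p i ≠ 0 := ne_of_gt (hppos i)
    have hB0 : L i ^ β ≠ 0 := ne_of_gt (hℓpos i)
    have hT0 : (1 + τ) ≠ 0 := ne_of_gt hT
    rw [Pi.sub_apply, hZ]
    simp only [Pi.smul_apply, Pi.add_apply, Pi.sub_apply, smul_eq_mul, basisVec,
      Pi.single_apply, hMdef, hcdef]
    split_ifs with h
    · subst h
      field_simp
      ring
    · simp only [mul_zero, sub_zero]
      field_simp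
  -- expectation of the Z-term, coordinate-wise
  have E5 : ∑ i, p i * wnormSq L β (Z i - u)
      = ∑ j, L j ^ β * ((1 - p j) * M j ^ 2 + p j * (M j - c j / (1 + τ)) ^ 2) := by
    simp only [wnormSq, Finset.mul_sum]
    rw [Finset.sum_comm]
    apply Finset.sum_congr rfl
    intro j _
    rw [← Finset.add_sum_erase _ _ (Finset.mem_univ j)]
    have h1 : (Z j - u) j = M j - c j / (1 + τ) := by rw [hZu j j, if_pos rfl]
    have h2 : ∀ i ∈ Finset.univ.erase j,
        p i * (L j ^ β * ((Z i - u) j) ^ 2) = p i * (L j ^ β * M j ^ 2) := by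
      intro i hi
      have hij : j ≠ i := fun h => (Finset.mem_erase.mp hi).1 h.symm
      rw [hZu i j, if_neg hij]
    rw [Finset.sum_congr rfl h2, ← Finset.sum_mul]
    have h3 : ∑ i ∈ Finset.univ.erase j, p i = 1 - p j := by
      have h4 := Finset.add_sum_erase Finset.univ p (Finset.mem_univ j)
      rw [hpsum] at h4
      linarith
    rw [h1, h3]
    ring
  -- per-coordinate inequality
  have main : ∑ i, (η * coordGrad f xk1 i * (zk i - u i) - τ/2 * (L i ^ β * (u i - xk1 i)^2))
      ≤ ∑ i, (η^2 * Sα^2 * (p i * (f xk1 - f (Y i))) + 1/2 * (L i ^ β * (zk i - u i)^2)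
          - (1+τ)/2 * (L i ^ β * ((1 - p i) * M i ^ 2 + p i * (M i - c i / (1+τ)) ^ 2))) := by
    apply Finset.sum_le_sum
    intro i _
    have hMi : M i = ((zk i - u i) + τ * (xk1 i - u i)) / (1 + τ) := by
      simp only [hMdef]
      field_simp
      ring
    have hb2 : (u i - xk1 i)^2 = (xk1 i - u i)^2 := by ring
    rw [hgc i, hMi, hb2]
    exact key_ineq (p i) (L i ^ β) τ (c i) (zk i - u i) (xk1 i - u i)
      (η^2 * Sα^2 * (p i * (f xk1 - f (Y i)))) (hℓpos i).le (hppos i).le (hple i) hτ0 (hF i)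
  -- assemble
  have eqL : η * (∑ i, coordGrad f xk1 i * (zk i - u i)) - τ / 2 * wnormSq L β (u - xk1)
      = ∑ i, (η * coordGrad f xk1 i * (zk i - u i) - τ/2 * (L i ^ β * (u i - xk1 i)^2)) := by
    simp only [wnormSq, Pi.sub_apply, Finset.mul_sum]
    rw [← Finset.sum_sub_distrib]
    apply Finset.sum_congr rfl
    intro i _
    ring
  have e3 : f xk1 - ∑ i, p i * f (Y i) = ∑ i, p i * (f xk1 - f (Y i)) := by
    simp only [mul_sub]
    rw [Finset.sum_sub_distrib, ← Finset.sum_mul, hpsum, one_mul]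
  have eqR : η ^ 2 * Sα ^ 2 * (f xk1 - ∑ i, p i * f (Y i))
        + (1 / 2) * wnormSq L β (zk - u)
        - (1 + τ) / 2 * ∑ i, p i * wnormSq L β (Z i - u)
      = ∑ i, (η^2 * Sα^2 * (p i * (f xk1 - f (Y i))) + 1/2 * (L i ^ β * (zk i - u i)^2)
          - (1+τ)/2 * (L i ^ β * ((1 - p i) * M i ^ 2 + p i * (M i - c i / (1+τ)) ^ 2))) := by
    rw [E5, e3]
    simp only [wnormSq, Pi.sub_apply, Finset.mul_sum]
    rw [← Finset.sum_add_distrib, ← Finset.sum_sub_distrib]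
  rw [eqL, eqR]
  exact main
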